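/- The set M₊ = {(x, y, θ) ∈ ℝ² × (0, 2π) : x² + y² < 1 and x sin(θ/2) − y cos(θ/2) > 0} is open, path-connected, and simply connected. -/
import Mathlib

/-- The domain `M₊ = {(x, y, θ) ∈ ℝ² × (0, 2π) : x² + y² < 1, P(x,y,θ) > 0}`,
where `P(x,y,θ) = x sin(θ/2) − y cos(θ/2)`. -/
def Mplus : Set (ℝ × ℝ × ℝ) :=
  {p | p.2.2 ∈ Set.Ioo 0 (2 * Real.pi) ∧ p.1 ^ 2 + p.2.1 ^ 2 < 1 ∧
    0 < p.1 * Real.sin (p.2.2 / 2) - p.2.1 * Real.cos (p.2.2 / 2)}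

/-- The "straightened" set: `θ ∈ (0,2π)`, unit disc, `u > 0`. -/
def Cplus : Set (ℝ × ℝ × ℝ) :=
  {p | p.2.2 ∈ Set.Ioo 0 (2 * Real.pi) ∧ p.1 ^ 2 + p.2.1 ^ 2 < 1 ∧ 0 < p.1}

/-- Rotation by `θ/2` in the `(x,y)` plane, as a homeomorphism of `ℝ³`. -/
noncomputable def rotHomeo : (ℝ × ℝ × ℝ) ≃ₜ (ℝ × ℝ × ℝ) where
  toFun p := (p.1 * Real.sin (p.2.2 / 2) - p.2.1 * Real.cos (p.2.2 / 2),
    p.1 * Real.cos (p.2.2 / 2) + p.2.1 * Real.sin (p.2.2 / 2), p.2.2)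
  invFun p := (p.1 * Real.sin (p.2.2 / 2) + p.2.1 * Real.cos (p.2.2 / 2),
    -p.1 * Real.cos (p.2.2 / 2) + p.2.1 * Real.sin (p.2.2 / 2), p.2.2)
  left_inv p := by
    obtain ⟨x, y, t⟩ := p
    have h := Real.sin_sq_add_cos_sq (t / 2)
    simp only
    refine Prod.ext ?_ (Prod.ext ?_ rfl) <;> simp
    · linear_combination x * h
    · linear_combination y * h
  right_inv p := by
    obtain ⟨x, y, t⟩ := p
    have h := Real.sin_sq_add_cos_sq (t / 2)
    simp only
    refine Prod.ext ?_ (Prod.ext ?_ rfl) <;> simp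
    · linear_combination x * h
    · linear_combination y * h
  continuous_toFun := by fun_prop
  continuous_invFun := by fun_prop

lemma Mplus_eq : Mplus = rotHomeo ⁻¹' Cplus := by
  ext ⟨x, y, t⟩
  have h := Real.sin_sq_add_cos_sq (t / 2)
  simp only [Mplus, Cplus, rotHomeo, Set.mem_preimage, Set.mem_setOf_eq, Homeomorph.homeomorph_mk_coe, Equiv.coe_fn_mk]
  constructor
  · rintro ⟨h1, h2, h3⟩
    exact ⟨h1, by nlinarith, h3⟩
  · rintro ⟨h1, h2, h3⟩
    exact ⟨h1, by nlinarith, h3⟩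

lemma Cplus_convex : Convex ℝ Cplus := by
  rintro ⟨x1, y1, t1⟩ ⟨hx1, hd1, hu1⟩ ⟨x2, y2, t2⟩ ⟨hx2, hd2, hu2⟩ a b ha hb hab
  dsimp only at hd1 hu1 hd2 hu2
  refine ⟨?_, ?_, ?_⟩
  · exact convex_Ioo 0 (2 * Real.pi) hx1 hx2 ha hb hab
  · simp only [Prod.smul_mk, Prod.mk_add_mk, smul_eq_mul]
    have key : (a*x1+b*x2)^2+(a*y1+b*y2)^2 ≤ a*(x1^2+y1^2)+b*(x2^2+y2^2) := by
      nlinarith [mul_nonneg ha hb, sq_nonneg (x1-x2), sq_nonneg (y1-y2)]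
    have k1 := mul_le_mul_of_nonneg_left hd1.le ha
    have k2 := mul_le_mul_of_nonneg_left hd2.le hb
    rcases ha.eq_or_lt with h | h
    · have k2' := mul_lt_mul_of_pos_left hd2 (show (0:ℝ) < b by linarith)
      nlinarith [key]
    · have k1' := mul_lt_mul_of_pos_left hd1 h
      nlinarith [key]
  · simp only [Prod.smul_mk, Prod.mk_add_mk, smul_eq_mul]
    rcases ha.eq_or_lt with h | h
    · have hb1 : b = 1 := by linarith
      rw [← h, hb1]; simpa using hu2
    · nlinarith [mul_pos h hu1, mul_nonneg hb hu2.le]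
  
lemma Cplus_nonempty : Cplus.Nonempty := by
  refine ⟨(1/2, 0, Real.pi), ?_⟩
  simp only [Cplus, Set.mem_setOf_eq, Set.mem_Ioo]
  norm_num
  exact ⟨Real.pi_pos, by linarith [Real.pi_pos]⟩

lemma Cplus_open : IsOpen Cplus := by
  have : Cplus = {p : ℝ × ℝ × ℝ | 0 < p.2.2} ∩ {p | p.2.2 < 2 * Real.pi} ∩
      ({p | p.1 ^ 2 + p.2.1 ^ 2 < 1} ∩ {p | 0 < p.1}) := by
    ext p; simp only [Cplus, Set.mem_setOf_eq, Set.mem_Ioo, Set.mem_inter_iff, and_assoc]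
  rw [this]
  refine ((isOpen_lt continuous_const (by fun_prop)).inter
    (isOpen_lt (by fun_prop) continuous_const)).inter
    ((isOpen_lt (by fun_prop) continuous_const).inter
    (isOpen_lt continuous_const (by fun_prop)))

/-- The set `M₊` is open, path-connected, and simply connected. -/
theorem Mplus_open_connected_simplyConnected :
    IsOpen Mplus ∧ IsPathConnected Mplus ∧ SimplyConnectedSpace ↥Mplus := by
  have himg : Mplus = rotHomeo.symm '' Cplus := by
    rw [Mplus_eq, ← Homeomorph.image_symm]
  refine ⟨Mplus_eq ▸ Cplus_open.preimage rotHomeo.continuous, ?_, ?_⟩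
  · rw [himg]
    exact (Cplus_convex.isPathConnected Cplus_nonempty).image rotHomeo.symm.continuous
  · have : ContractibleSpace ↥Cplus := Cplus_convex.contractibleSpace Cplus_nonempty
    have e : ↥Cplus ≃ₜ ↥Mplus := himg ▸ rotHomeo.symm.image Cplus
    have : ContractibleSpace ↥Mplus := e.symm.contractibleSpace
    infer_instance
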